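/- Let T > 0. Let v, w : [0,T] × [0,1] → ℝ be continuous, continuously differentiable in the spatial variable x, with v(t,0) = v(t,1) = w(t,0) = w(t,1) = 0 for all t ∈ [0,T], and let φ : [0,1] → ℝ be continuously differentiable with φ(0) = φ(1) = 0. Then |∫₀ᵀ ∫₀¹ (v ∂_x v − w ∂_x w)(t,x) φ(x) dx dt| ≤ (1/2) (∫₀¹ φ′(x)² dx)^{1/2} · (∫₀ᵀ [∫₀¹ (v+w)(t,x)² dx + ∫₀¹ (∂_x(v+w))(t,x)² dx] dt)^{1/2} · (∫₀ᵀ ∫₀¹ (v−w)(t,x)² dx dt)^{1/2}. (This is the estimate in Step 2 of the proof of Lemma 2.4, which transfers strong L²(0,T;L²[0,1]) convergence of the Galerkin approximations to convergence of the nonlinear terms.) -/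

import Mathlib

open MeasureTheory intervalIntegral Set

lemma cs_interval (a b : ℝ) (hab : a ≤ b) (f g : ℝ → ℝ) (hf : Continuous f) (hg : Continuous g) :
    |∫ x in a..b, f x * g x| ≤
      Real.sqrt (∫ x in a..b, f x ^ 2) * Real.sqrt (∫ x in a..b, g x ^ 2) := by
  set A := ∫ x in a..b, f x ^ 2 with hA_def
  set B := ∫ x in a..b, f x * g x with hB_def
  set C := ∫ x in a..b, g x ^ 2 with hC_def
  have hA : 0 ≤ A := intervalIntegral.integral_nonneg hab fun x _ => sq_nonneg _
  have hC : 0 ≤ C := intervalIntegral.integral_nonneg hab fun x _ => sq_nonneg _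
  have key : ∀ lam : ℝ, 0 ≤ C * (lam * lam) + (2 * B) * lam + A := by
    intro lam
    have h0 : 0 ≤ ∫ x in a..b, (f x + lam * g x) ^ 2 :=
      intervalIntegral.integral_nonneg hab fun x _ => sq_nonneg _
    have heq : (∫ x in a..b, (f x + lam * g x) ^ 2)
        = A + (2 * lam) * B + lam ^ 2 * C := by
      have h1 : (∫ x in a..b, (f x + lam * g x) ^ 2)
          = ∫ x in a..b, (f x ^ 2 + (2 * lam) * (f x * g x) + lam ^ 2 * g x ^ 2) := by
        congr 1; ext x; ring
      rw [h1]
      rw [intervalIntegral.integral_add (f := fun x => f x ^ 2 + (2 * lam) * (f x * g x))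
          (g := fun x => lam ^ 2 * g x ^ 2) (((hf.pow 2).add
            ((continuous_const.mul (hf.mul hg)))).intervalIntegrable a b)
          ((continuous_const.mul (hg.pow 2)).intervalIntegrable a b),
        intervalIntegral.integral_add (f := fun x => f x ^ 2)
          (g := fun x => (2 * lam) * (f x * g x)) ((hf.pow 2).intervalIntegrable a b)
          ((continuous_const.mul (hf.mul hg)).intervalIntegrable a b),
        intervalIntegral.integral_const_mul, intervalIntegral.integral_const_mul]
    nlinarith [h0, heq]
  have hdisc : discrim C (2 * B) A ≤ 0 := discrim_le_zero key
  rw [discrim] at hdisc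
  have hB2 : B ^ 2 ≤ A * C := by nlinarith [hdisc]
  calc |B| = Real.sqrt (B ^ 2) := (Real.sqrt_sq_eq_abs B).symm
    _ ≤ Real.sqrt (A * C) := Real.sqrt_le_sqrt hB2
    _ = Real.sqrt A * Real.sqrt C := Real.sqrt_mul hA C

lemma sobolev_sup (f f' : ℝ → ℝ) (hf' : Continuous f') (hd : ∀ x, HasDerivAt f (f' x) x)
    (h0 : f 0 = 0) {x : ℝ} (hx0 : 0 ≤ x) (hx1 : x ≤ 1) :
    f x ^ 2 ≤ (∫ y in (0:ℝ)..1, f y ^ 2) + ∫ y in (0:ℝ)..1, f' y ^ 2 := by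
  have hfc : Continuous f := by
    rw [continuous_iff_continuousAt]; exact fun y => (hd y).continuousAt
  have hsum : Continuous fun y => f y ^ 2 + f' y ^ 2 := (hfc.pow 2).add (hf'.pow 2)
  have hftc : (∫ y in (0:ℝ)..x, 2 * f y ^ 1 * f' y) = f x ^ 2 - f 0 ^ 2 :=
    intervalIntegral.integral_eq_sub_of_hasDerivAt
      (fun y _ => (hd y).pow 2)
      (((continuous_const.mul (hfc.pow 1)).mul hf').intervalIntegrable 0 x)
  have h1 : f x ^ 2 = ∫ y in (0:ℝ)..x, 2 * f y ^ 1 * f' y := by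
    rw [hftc, h0]; ring
  have h2 : (∫ y in (0:ℝ)..x, 2 * f y ^ 1 * f' y)
      ≤ ∫ y in (0:ℝ)..x, (f y ^ 2 + f' y ^ 2) := by
    apply intervalIntegral.integral_mono_on hx0
      (((continuous_const.mul (hfc.pow 1)).mul hf').intervalIntegrable 0 x)
      (hsum.intervalIntegrable 0 x)
    intro y _
    show 2 * f y ^ 1 * f' y ≤ f y ^ 2 + f' y ^ 2
    nlinarith [sq_nonneg (f y - f' y)]
  have h3 : (∫ y in (0:ℝ)..x, (f y ^ 2 + f' y ^ 2))
      ≤ ∫ y in (0:ℝ)..1, (f y ^ 2 + f' y ^ 2) := by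
    rw [← intervalIntegral.integral_add_adjacent_intervals
      (hsum.intervalIntegrable 0 x) (hsum.intervalIntegrable x 1)]
    have : 0 ≤ ∫ y in x..1, (f y ^ 2 + f' y ^ 2) :=
      intervalIntegral.integral_nonneg hx1 fun y _ => by positivity
    linarith
  have h4 : (∫ y in (0:ℝ)..1, (f y ^ 2 + f' y ^ 2))
      = (∫ y in (0:ℝ)..1, f y ^ 2) + ∫ y in (0:ℝ)..1, f' y ^ 2 :=
    intervalIntegral.integral_add ((hfc.pow 2).intervalIntegrable 0 1)
      ((hf'.pow 2).intervalIntegrable 0 1)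
  linarith [h1, h2, h3, h4.le, h4.ge]

lemma ibp_step (a a' b b' φ ψ : ℝ → ℝ)
    (ha : Continuous a) (hb : Continuous b) (ha' : Continuous a') (hb' : Continuous b')
    (hψ : Continuous ψ) (hφc : Continuous φ)
    (hda : ∀ x, HasDerivAt a (a' x) x) (hdb : ∀ x, HasDerivAt b (b' x) x)
    (hdφ : ∀ x, HasDerivAt φ (ψ x) x) (hφ0 : φ 0 = 0) (hφ1 : φ 1 = 0) :
    (∫ x in (0:ℝ)..1, (a x * a' x - b x * b' x) * φ x)
      = -(1/2) * ∫ x in (0:ℝ)..1, (a x + b x) * (a x - b x) * ψ x := by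
  have hF : ∀ x, HasDerivAt (fun y => (1/2) * (a y ^ 2 - b y ^ 2) * φ y)
      ((a x * a' x - b x * b' x) * φ x + (1/2) * ((a x + b x) * (a x - b x)) * ψ x) x := by
    intro x
    have h1 : HasDerivAt (fun y => (1/2) * (a y ^ 2 - b y ^ 2))
        ((1/2) * (2 * a x ^ 1 * a' x - 2 * b x ^ 1 * b' x)) x :=
      (((hda x).pow 2).sub ((hdb x).pow 2)).const_mul (1/2)
    have : HasDerivAt (fun y => (1/2) * (a y ^ 2 - b y ^ 2) * φ y)
        ((1/2) * (2 * a x ^ 1 * a' x - 2 * b x ^ 1 * b' x) * φ x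
          + (1/2) * (a x ^ 2 - b x ^ 2) * ψ x) x := h1.mul (hdφ x)
    convert this using 1
    ring
  have hint1 : IntervalIntegrable (fun x => (a x * a' x - b x * b' x) * φ x) volume 0 1 :=
    (((ha.mul ha').sub (hb.mul hb')).mul hφc).intervalIntegrable 0 1
  have hint2 : IntervalIntegrable
      (fun x => (1/2) * ((a x + b x) * (a x - b x)) * ψ x) volume 0 1 :=
    ((continuous_const.mul ((ha.add hb).mul (ha.sub hb))).mul hψ).intervalIntegrable 0 1
  have hftc : (∫ x in (0:ℝ)..1,
      ((a x * a' x - b x * b' x) * φ x + (1/2) * ((a x + b x) * (a x - b x)) * ψ x)) = 0 := by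
    rw [intervalIntegral.integral_eq_sub_of_hasDerivAt (fun x _ => hF x)
      (hint1.add hint2)]
    simp [hφ0, hφ1]
  rw [intervalIntegral.integral_add hint1 hint2] at hftc
  have : (∫ x in (0:ℝ)..1, (1/2) * ((a x + b x) * (a x - b x)) * ψ x)
      = (1/2) * ∫ x in (0:ℝ)..1, (a x + b x) * (a x - b x) * ψ x := by
    rw [← intervalIntegral.integral_const_mul]
    congr 1; ext x; ring
  rw [this] at hftc
  linarith

/-- Step 2 of the proof of Lemma 2.4: the estimate transferring strong
`L²(0,T;L²[0,1])` convergence to convergence of the Burgers nonlinear terms.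
For `v, w` continuous, `C¹` in the spatial variable with Dirichlet boundary values,
and `φ ∈ C¹` vanishing at the endpoints,
`|∫₀ᵀ∫₀¹ (v ∂ₓv - w ∂ₓw) φ| ≤ (1/2) ‖φ'‖₂ ‖v+w‖_{L²(0,T;H¹)} ‖v-w‖_{L²(0,T;L²)}`. -/
theorem burgers_nonlinearity_difference_estimate (T : ℝ) (hT : 0 < T)
    (v w v' w' : ℝ → ℝ → ℝ)
    (hv : Continuous (Function.uncurry v)) (hw : Continuous (Function.uncurry w))
    (hv' : Continuous (Function.uncurry v')) (hw' : Continuous (Function.uncurry w'))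
    (hdv : ∀ t x : ℝ, HasDerivAt (v t) (v' t x) x)
    (hdw : ∀ t x : ℝ, HasDerivAt (w t) (w' t x) x)
    (hvb : ∀ t ∈ Icc (0:ℝ) T, v t 0 = 0 ∧ v t 1 = 0)
    (hwb : ∀ t ∈ Icc (0:ℝ) T, w t 0 = 0 ∧ w t 1 = 0)
    (φ : ℝ → ℝ) (hφ : ContDiff ℝ 1 φ) (hφ0 : φ 0 = 0) (hφ1 : φ 1 = 0) :
    |∫ t in (0:ℝ)..T, ∫ x in (0:ℝ)..1,
        (v t x * v' t x - w t x * w' t x) * φ x| ≤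
      (1/2) * Real.sqrt (∫ x in (0:ℝ)..1, deriv φ x ^ 2) *
        Real.sqrt (∫ t in (0:ℝ)..T,
          ((∫ x in (0:ℝ)..1, (v t x + w t x) ^ 2) +
            ∫ x in (0:ℝ)..1, (v' t x + w' t x) ^ 2)) *
        Real.sqrt (∫ t in (0:ℝ)..T, ∫ x in (0:ℝ)..1, (v t x - w t x) ^ 2) := by
  set ψ : ℝ → ℝ := deriv φ with hψ_def
  have hψ : Continuous ψ := hφ.continuous_deriv le_rfl
  have hφc : Continuous φ := hφ.continuous
  have hdφ : ∀ x, HasDerivAt φ (ψ x) x := fun x =>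
    ((hφ.differentiable one_ne_zero) x).hasDerivAt
  have hvc : ∀ t, Continuous (v t) := fun t => hv.comp (Continuous.prodMk_right t)
  have hwc : ∀ t, Continuous (w t) := fun t => hw.comp (Continuous.prodMk_right t)
  have hvc' : ∀ t, Continuous (v' t) := fun t => hv'.comp (Continuous.prodMk_right t)
  have hwc' : ∀ t, Continuous (w' t) := fun t => hw'.comp (Continuous.prodMk_right t)
  set J : ℝ → ℝ := fun t => ∫ x in (0:ℝ)..1, (v t x + w t x) * (v t x - w t x) * ψ x with hJ_def
  set A : ℝ → ℝ := fun t =>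
    (∫ x in (0:ℝ)..1, (v t x + w t x) ^ 2) + ∫ x in (0:ℝ)..1, (v' t x + w' t x) ^ 2 with hA_def
  set B : ℝ → ℝ := fun t => ∫ x in (0:ℝ)..1, (v t x - w t x) ^ 2 with hB_def
  have hA_nonneg : ∀ t, 0 ≤ A t := fun t =>
    add_nonneg (intervalIntegral.integral_nonneg zero_le_one fun x _ => sq_nonneg _)
      (intervalIntegral.integral_nonneg zero_le_one fun x _ => sq_nonneg _)
  have hB_nonneg : ∀ t, 0 ≤ B t := fun t =>
    intervalIntegral.integral_nonneg zero_le_one fun x _ => sq_nonneg _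
  have hψ2_nonneg : (0:ℝ) ≤ ∫ x in (0:ℝ)..1, ψ x ^ 2 :=
    intervalIntegral.integral_nonneg zero_le_one fun x _ => sq_nonneg _
  -- continuity in t of the parametric integrals
  have hJc : Continuous J := by
    apply intervalIntegral.continuous_parametric_intervalIntegral_of_continuous'
      (f := fun t x => (v t x + w t x) * (v t x - w t x) * ψ x)
    exact ((hv.add hw).mul (hv.sub hw)).mul (hψ.comp continuous_snd)
  have hAc1 : Continuous fun t => ∫ x in (0:ℝ)..1, (v t x + w t x) ^ 2 := by
    apply intervalIntegral.continuous_parametric_intervalIntegral_of_continuous'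
      (f := fun t x => (v t x + w t x) ^ 2)
    exact (hv.add hw).pow 2
  have hAc2 : Continuous fun t => ∫ x in (0:ℝ)..1, (v' t x + w' t x) ^ 2 := by
    apply intervalIntegral.continuous_parametric_intervalIntegral_of_continuous'
      (f := fun t x => (v' t x + w' t x) ^ 2)
    exact (hv'.add hw').pow 2
  have hAc : Continuous A := hAc1.add hAc2
  have hBc : Continuous B := by
    apply intervalIntegral.continuous_parametric_intervalIntegral_of_continuous'
      (f := fun t x => (v t x - w t x) ^ 2)
    exact (hv.sub hw).pow 2
  -- step 1: integration by parts in x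
  have hinner : ∀ t, (∫ x in (0:ℝ)..1, (v t x * v' t x - w t x * w' t x) * φ x)
      = -(1/2) * J t := fun t =>
    ibp_step (v t) (v' t) (w t) (w' t) φ ψ (hvc t) (hwc t) (hvc' t) (hwc' t) hψ hφc
      (hdv t) (hdw t) hdφ hφ0 hφ1
  have houter : (∫ t in (0:ℝ)..T, ∫ x in (0:ℝ)..1,
      (v t x * v' t x - w t x * w' t x) * φ x) = -(1/2) * ∫ t in (0:ℝ)..T, J t := by
    rw [← intervalIntegral.integral_const_mul]
    exact intervalIntegral.integral_congr fun t _ => hinner t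
  rw [houter, abs_mul]
  have habs : |(-(1/2) : ℝ)| = 1/2 := by norm_num
  rw [habs]
  -- step 2: pointwise bound on |J t| for t ∈ [0, T]
  have hJbound : ∀ t ∈ Icc (0:ℝ) T, |J t| ≤
      Real.sqrt (∫ x in (0:ℝ)..1, ψ x ^ 2) * (Real.sqrt (A t) * Real.sqrt (B t)) := by
    intro t ht
    have hsum0 : v t 0 + w t 0 = 0 := by rw [(hvb t ht).1, (hwb t ht).1, add_zero]
    have hJt : J t = ∫ x in (0:ℝ)..1, (v t x - w t x) * ((v t x + w t x) * ψ x) := by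
      apply intervalIntegral.integral_congr
      intro x _; ring
    have hcs : |J t| ≤ Real.sqrt (∫ x in (0:ℝ)..1, (v t x - w t x) ^ 2) *
        Real.sqrt (∫ x in (0:ℝ)..1, ((v t x + w t x) * ψ x) ^ 2) := by
      rw [hJt]
      exact cs_interval 0 1 zero_le_one _ _ ((hvc t).sub (hwc t)) (((hvc t).add (hwc t)).mul hψ)
    have hsob : ∀ x ∈ Icc (0:ℝ) 1, ((v t x + w t x) * ψ x) ^ 2 ≤ A t * ψ x ^ 2 := by
      intro x hx
      have := sobolev_sup (fun y => v t y + w t y) (fun y => v' t y + w' t y)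
        ((hvc' t).add (hwc' t)) (fun y => (hdv t y).add (hdw t y)) hsum0 hx.1 hx.2
      have h2 : (v t x + w t x) ^ 2 * ψ x ^ 2 ≤ A t * ψ x ^ 2 :=
        mul_le_mul_of_nonneg_right this (sq_nonneg _)
      calc ((v t x + w t x) * ψ x) ^ 2 = (v t x + w t x) ^ 2 * ψ x ^ 2 := by ring
        _ ≤ A t * ψ x ^ 2 := h2
    have hmono : (∫ x in (0:ℝ)..1, ((v t x + w t x) * ψ x) ^ 2)
        ≤ ∫ x in (0:ℝ)..1, A t * ψ x ^ 2 :=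
      intervalIntegral.integral_mono_on zero_le_one
        (((((hvc t).add (hwc t)).mul hψ).pow 2).intervalIntegrable 0 1)
        ((continuous_const.mul (hψ.pow 2)).intervalIntegrable 0 1)
        (fun x hx => hsob x hx)
    have hAmul : (∫ x in (0:ℝ)..1, A t * ψ x ^ 2) = A t * ∫ x in (0:ℝ)..1, ψ x ^ 2 :=
      intervalIntegral.integral_const_mul _ _
    have hs2 : Real.sqrt (∫ x in (0:ℝ)..1, ((v t x + w t x) * ψ x) ^ 2)
        ≤ Real.sqrt (A t) * Real.sqrt (∫ x in (0:ℝ)..1, ψ x ^ 2) := by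
      rw [← Real.sqrt_mul (hA_nonneg t)]
      exact Real.sqrt_le_sqrt (by rw [← hAmul]; exact hmono)
    calc |J t| ≤ Real.sqrt (B t) *
        Real.sqrt (∫ x in (0:ℝ)..1, ((v t x + w t x) * ψ x) ^ 2) := hcs
      _ ≤ Real.sqrt (B t) * (Real.sqrt (A t) * Real.sqrt (∫ x in (0:ℝ)..1, ψ x ^ 2)) :=
          mul_le_mul_of_nonneg_left hs2 (Real.sqrt_nonneg _)
      _ = Real.sqrt (∫ x in (0:ℝ)..1, ψ x ^ 2) * (Real.sqrt (A t) * Real.sqrt (B t)) := by ring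
  -- step 3: integrate in t, Cauchy–Schwarz in t
  have h1 : |∫ t in (0:ℝ)..T, J t| ≤ ∫ t in (0:ℝ)..T, |J t| :=
    intervalIntegral.abs_integral_le_integral_abs hT.le
  have h2 : (∫ t in (0:ℝ)..T, |J t|) ≤ ∫ t in (0:ℝ)..T,
      Real.sqrt (∫ x in (0:ℝ)..1, ψ x ^ 2) * (Real.sqrt (A t) * Real.sqrt (B t)) := by
    apply intervalIntegral.integral_mono_on hT.le (hJc.abs.intervalIntegrable 0 T)
      ((continuous_const.mul ((Real.continuous_sqrt.comp hAc).mul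
        (Real.continuous_sqrt.comp hBc))).intervalIntegrable 0 T)
    exact hJbound
  have h3 : (∫ t in (0:ℝ)..T,
      Real.sqrt (∫ x in (0:ℝ)..1, ψ x ^ 2) * (Real.sqrt (A t) * Real.sqrt (B t)))
      = Real.sqrt (∫ x in (0:ℝ)..1, ψ x ^ 2) *
        ∫ t in (0:ℝ)..T, Real.sqrt (A t) * Real.sqrt (B t) :=
    intervalIntegral.integral_const_mul _ _
  have h4 : (∫ t in (0:ℝ)..T, Real.sqrt (A t) * Real.sqrt (B t))
      ≤ Real.sqrt (∫ t in (0:ℝ)..T, A t) * Real.sqrt (∫ t in (0:ℝ)..T, B t) := by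
    have hcs := cs_interval 0 T hT.le (fun t => Real.sqrt (A t)) (fun t => Real.sqrt (B t))
      (Real.continuous_sqrt.comp hAc) (Real.continuous_sqrt.comp hBc)
    have hA2 : (∫ t in (0:ℝ)..T, Real.sqrt (A t) ^ 2) = ∫ t in (0:ℝ)..T, A t :=
      intervalIntegral.integral_congr fun t _ => Real.sq_sqrt (hA_nonneg t)
    have hB2 : (∫ t in (0:ℝ)..T, Real.sqrt (B t) ^ 2) = ∫ t in (0:ℝ)..T, B t :=
      intervalIntegral.integral_congr fun t _ => Real.sq_sqrt (hB_nonneg t)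
    rw [hA2, hB2] at hcs
    exact (le_abs_self _).trans hcs
  have hfinal : |∫ t in (0:ℝ)..T, J t| ≤ Real.sqrt (∫ x in (0:ℝ)..1, ψ x ^ 2) *
      (Real.sqrt (∫ t in (0:ℝ)..T, A t) * Real.sqrt (∫ t in (0:ℝ)..T, B t)) := by
    calc |∫ t in (0:ℝ)..T, J t| ≤ ∫ t in (0:ℝ)..T, |J t| := h1
      _ ≤ _ := h2
      _ = _ := h3
      _ ≤ _ := mul_le_mul_of_nonneg_left h4 (Real.sqrt_nonneg _)
  calc (1/2) * |∫ t in (0:ℝ)..T, J t|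
      ≤ (1/2) * (Real.sqrt (∫ x in (0:ℝ)..1, ψ x ^ 2) *
        (Real.sqrt (∫ t in (0:ℝ)..T, A t) * Real.sqrt (∫ t in (0:ℝ)..T, B t))) :=
        mul_le_mul_of_nonneg_left hfinal (by norm_num)
    _ = (1/2) * Real.sqrt (∫ x in (0:ℝ)..1, ψ x ^ 2) *
        Real.sqrt (∫ t in (0:ℝ)..T, A t) * Real.sqrt (∫ t in (0:ℝ)..T, B t) := by ring
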